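/- Let A be a field of characteristic zero, B a finite-dimensional commutative A-algebra, L an algebraically closed field extension of A, F a subfield of L containing A, F' = {x ∈ L : x is algebraic over F}, and e : F → L ⊗[A] B an A-algebra homomorphism. For each maximal ideal m of B let σ_m : F → L ⊗[A] (B/m) denote the composite of e with the natural map L ⊗[A] B → L ⊗[A] (B/m). Suppose that for each maximal ideal m of B we are given an A-algebra homomorphism σ'_m : F' → L ⊗[A] (B/m) extending σ_m. Then there exists an A-algebra homomorphism e' : F' → L ⊗[A] B extending e such that for every maximal ideal m of B, the composite of e' with the natural map L ⊗[A] B → L ⊗[A] (B/m) equals σ'_m. -/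

import Mathlib

universe u v w

theorem aux_lift_nilpotent {K : Type u} {K' : Type v} {S : Type w}
    [Field K] [Field K'] [Algebra K K'] [Algebra.IsSeparable K K']
    [CommRing S] [Algebra K S] (I : Ideal S) (hI : IsNilpotent I)
    (g : K' →ₐ[K] S ⧸ I) :
    ∃ f : K' →ₐ[K] S, (Ideal.Quotient.mkₐ K I).comp f = g := by
  let K₁ : Type (max u v w) := ULift.{max v w} K
  let K'₁ : Type (max u v w) := ULift.{max u w} K'
  let S₁ : Type (max u v w) := ULift.{max u v} S
  let eK : K ≃+* K₁ := ULift.ringEquiv.symm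
  let eK' : K' ≃+* K'₁ := ULift.ringEquiv.symm
  let eS : S ≃+* S₁ := ULift.ringEquiv.symm
  letI : Algebra K₁ K'₁ := RingHom.toAlgebra
    ((eK'.toRingHom.comp (algebraMap K K')).comp eK.symm.toRingHom)
  letI : Algebra K₁ S₁ := RingHom.toAlgebra
    ((eS.toRingHom.comp (algebraMap K S)).comp eK.symm.toRingHom)
  haveI : Algebra.IsSeparable K₁ K'₁ :=
    Algebra.IsSeparable.of_equiv_equiv eK eK' (by ext x; rfl)
  haveI : Algebra.FormallyEtale K₁ K'₁ := Algebra.FormallyEtale.of_isSeparable K₁ K'₁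
  haveI : Algebra.FormallySmooth K₁ K'₁ := inferInstance
  let I₁ : Ideal S₁ := I.map (eS : S →+* S₁)
  have hI₁ : IsNilpotent I₁ := by
    obtain ⟨n, hn⟩ := hI
    exact ⟨n, by rw [← Ideal.map_pow, hn, Ideal.zero_eq_bot, Ideal.map_bot]; rfl⟩
  let eQ : (S ⧸ I) ≃+* (S₁ ⧸ I₁) := Ideal.quotientEquiv I I₁ eS rfl
  have heQ : ∀ s : S, eQ (Ideal.Quotient.mk I s) = Ideal.Quotient.mk I₁ (eS s) := by
    intro s
    simp [eQ, Ideal.quotientEquiv_mk]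
  let g₁ : K'₁ →ₐ[K₁] S₁ ⧸ I₁ :=
    { toRingHom := (eQ.toRingHom.comp g.toRingHom).comp eK'.symm.toRingHom
      commutes' := by
        intro x
        show eQ (g (algebraMap K K' x.down)) = _
        rw [g.commutes]
        show eQ (Ideal.Quotient.mk I (algebraMap K S x.down)) = _
        rw [heQ]
        rfl }
  obtain ⟨f₁, hf₁⟩ := Algebra.FormallySmooth.exists_lift I₁ hI₁ g₁
  refine ⟨{ toRingHom := (eS.symm.toRingHom.comp f₁.toRingHom).comp eK'.toRingHom
            commutes' := ?_ }, ?_⟩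
  · intro c
    show eS.symm (f₁ (eK' (algebraMap K K' c))) = algebraMap K S c
    have : eK' (algebraMap K K' c) = algebraMap K₁ K'₁ (eK c) := rfl
    rw [this, f₁.commutes]
    show eS.symm (eS (algebraMap K S c)) = algebraMap K S c
    simp
  · ext x
    have h1 : Ideal.Quotient.mk I₁ (f₁ (eK' x)) = g₁ (eK' x) := by
      have := congrArg (fun h => h (eK' x)) hf₁
      simpa using this
    have h2 : g₁ (eK' x) = eQ (g x) := by
      show eQ (g (eK'.symm (eK' x))) = eQ (g x)
      rw [eK'.symm_apply_apply]
    apply eQ.injective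
    show eQ (Ideal.Quotient.mk I (eS.symm (f₁ (eK' x)))) = eQ (g x)
    rw [heQ, eS.apply_symm_apply, h1, h2]

set_option maxHeartbeats 1000000 in

/-- Let `A` be a field of characteristic zero, `B` a finite-dimensional
commutative `A`-algebra, `L` an algebraically closed field extension of `A`, `F` a subfield of
`L` containing `A`, `F' = {x ∈ L : x algebraic over F}`, and `e : F → L ⊗[A] B` an `A`-algebra
homomorphism.  For each maximal ideal `m` of `B` let `σ_m : F → L ⊗[A] (B/m)` be the composite
of `e` with the natural map `L ⊗[A] B → L ⊗[A] (B/m)`, and suppose we are given `A`-algebra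
homomorphisms `σ'_m : F' → L ⊗[A] (B/m)` extending the `σ_m`.  Then there is an `A`-algebra
homomorphism `e' : F' → L ⊗[A] B` extending `e` such that for every maximal ideal `m` the
composite of `e'` with `L ⊗[A] B → L ⊗[A] (B/m)` equals `σ'_m`. -/
theorem exists_extension_with_prescribed_residue_homs
    {A B L : Type*} [Field A] [CharZero A] [CommRing B] [Algebra A B]
    [FiniteDimensional A B]
    [Field L] [Algebra A L] [IsAlgClosed L]
    (F : IntermediateField A L)
    (F' : Subalgebra A L) (hF' : ∀ x : L, x ∈ F' ↔ IsAlgebraic F x)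
    (e : F →ₐ[A] TensorProduct A L B)
    (σ' : ∀ m : Ideal B, m.IsMaximal → (F' →ₐ[A] TensorProduct A L (B ⧸ m)))
    (hσ' : ∀ (m : Ideal B) (hm : m.IsMaximal) (x : F) (hx : (x : L) ∈ F'),
      σ' m hm ⟨(x : L), hx⟩ =
        Algebra.TensorProduct.map (AlgHom.id A L) (Ideal.Quotient.mkₐ A m) (e x)) :
    ∃ e' : F' →ₐ[A] TensorProduct A L B,
      (∀ (x : F) (hx : (x : L) ∈ F'), e' ⟨(x : L), hx⟩ = e x) ∧
      ∀ (m : Ideal B) (hm : m.IsMaximal),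
        (Algebra.TensorProduct.map (AlgHom.id A L) (Ideal.Quotient.mkₐ A m)).comp e' =
          σ' m hm := by
  classical
  have hmem : ∀ x : F, (x : L) ∈ F' := fun x =>
    (hF' _).2 (isAlgebraic_algebraMap (R := F) (A := L) x)
  -- `F'` is a field
  letI : Field F' := by
    refine IsField.toField ⟨⟨0, 1, fun h => zero_ne_one (congrArg Subtype.val h)⟩,
      mul_comm, ?_⟩
    intro a ha
    have h1 : IsAlgebraic F (a : L) := (hF' _).1 a.2
    refine ⟨⟨(a : L)⁻¹, (hF' _).2 h1.inv⟩, Subtype.ext ?_⟩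
    have hne : (a : L) ≠ 0 := fun h => ha (Subtype.ext h)
    simp [mul_inv_cancel₀ hne]
  -- use `K := ULift F` as base field to avoid instance diamonds
  let K := ULift.{0} (↥F)
  let dwn : K →+* F := ULift.ringEquiv.toRingHom
  let inclFF' : F →+* F' :=
    { toFun := fun x => (⟨(x : L), hmem x⟩ : F')
      map_one' := Subtype.ext (by simp)
      map_mul' := fun x y => Subtype.ext (by simp)
      map_zero' := Subtype.ext (by simp)
      map_add' := fun x y => Subtype.ext (by simp) }
  letI : Algebra K F' := RingHom.toAlgebra (inclFF'.comp dwn)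
  letI : Algebra K L := RingHom.toAlgebra ((algebraMap F L).comp dwn)
  haveI : CharZero F := charZero_of_injective_algebraMap (algebraMap A F).injective
  haveI : CharZero K := charZero_of_injective_ringHom
    (f := ((ULift.ringEquiv.symm : (↥F) ≃+* K) : (↥F) →+* K))
    (ULift.ringEquiv.symm : (↥F) ≃+* K).injective
  haveI : Algebra.IsAlgebraic K F' := by
    constructor
    intro x
    have h1 : IsAlgebraic F (x : L) := (hF' _).1 x.2
    have h2 : IsAlgebraic K ((x : L)) := by
      obtain ⟨p, hp, hp0⟩ := h1
      refine ⟨p.map ((ULift.ringEquiv.symm : (↥F) ≃+* K) : (↥F) →+* K), ?_, ?_⟩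
      · exact fun h => hp ((Polynomial.map_eq_zero_iff
          (ULift.ringEquiv.symm : (↥F) ≃+* K).injective).mp h)
      · rw [Polynomial.aeval_def, Polynomial.eval₂_map]
        exact hp0
    let valK : F' →ₐ[K] L := { toRingHom := F'.val.toRingHom, commutes' := fun c => rfl }
    exact (isAlgebraic_algHom_iff valK Subtype.val_injective).mp h2
  haveI : Algebra.IsIntegral K F' := Algebra.IsAlgebraic.isIntegral
  haveI : Algebra.IsSeparable K F' := inferInstance
  -- the big tensor ring
  set T := TensorProduct A L B with hT
  letI : Algebra K T := RingHom.toAlgebra (e.toRingHom.comp dwn)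
  haveI twr1 := IsScalarTower.of_algebraMap_eq (R := A) (S := K) (A := F')
    (fun a => Subtype.ext (by
      show (algebraMap A L) a = ((algebraMap A F a : ↥F) : L)
      rw [IsScalarTower.algebraMap_apply A (↥F) L a]
      rfl))
  haveI twr2 := IsScalarTower.of_algebraMap_eq (R := A) (S := K) (A := T)
    (fun a => by
      simp only [RingHom.algebraMap_toAlgebra, RingHom.comp_apply, ULift.algebraMap_eq, dwn]
      exact (e.commutes a).symm)
  -- Artinian / Noetherian facts
  haveI : IsArtinianRing B := IsArtinianRing.of_finite A B
  haveI : Module.Finite L T := Module.Finite.base_change A L B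
  haveI : IsNoetherianRing T := isNoetherianRing_iff.mpr (isNoetherian_of_tower L inferInstance)
  -- maximal ideals
  let ι := {I : Ideal B | I.IsMaximal}
  haveI : Finite ι := (IsArtinianRing.setOfPred_isMaximal_finite B).to_subtype
  letI : Fintype ι := Fintype.ofFinite ι
  let π : ∀ M : ι, T →ₐ[A] TensorProduct A L (B ⧸ M.1) := fun M =>
    Algebra.TensorProduct.map (AlgHom.id A L) (Ideal.Quotient.mkₐ A M.1)
  letI : ∀ M : ι, Algebra K (TensorProduct A L (B ⧸ M.1)) := fun M =>
    RingHom.toAlgebra ((π M).toRingHom.comp (e.toRingHom.comp dwn))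
  let πF : ∀ M : ι, T →ₐ[K] TensorProduct A L (B ⧸ M.1) := fun M =>
    { toRingHom := (π M).toRingHom, commutes' := fun c => rfl }
  let q : T →ₐ[K] ∀ M : ι, TensorProduct A L (B ⧸ M.1) := Pi.algHom K _ πF
  let τ : F' →ₐ[K] ∀ M : ι, TensorProduct A L (B ⧸ M.1) := Pi.algHom K _ fun M =>
    { toRingHom := (σ' M.1 M.2).toRingHom
      commutes' := fun c => hσ' M.1 M.2 c.down (hmem c.down) }
  -- CRT surjectivity
  have hpair : Pairwise fun M M' : ι => IsCoprime (M.1 : Ideal B) M'.1 := fun M M' hne =>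
    Ideal.isCoprime_iff_sup_eq.mpr
      (Ideal.IsMaximal.coprime_of_ne M.2 M'.2 (fun h => hne (Subtype.ext h)))
  have hBsurj : ∀ c : ∀ M : ι, B ⧸ M.1, ∃ b : B, ∀ M : ι, Ideal.Quotient.mk M.1 b = c M :=
    fun c => Ideal.pi_quotient_surjective hpair c
  have hsingle : ∀ (M : ι) (z : TensorProduct A L (B ⧸ M.1)),
      ∃ t : T, q t = Pi.single M z := by
    intro M z
    induction z using TensorProduct.induction_on with
    | zero => exact ⟨0, by rw [map_zero, Pi.single_zero]⟩
    | tmul a c =>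
      obtain ⟨b, hb⟩ := hBsurj (Pi.single M c)
      refine ⟨a ⊗ₜ b, funext fun M' => ?_⟩
      have h1 : q (a ⊗ₜ[A] b) M' = a ⊗ₜ (Ideal.Quotient.mk M'.1 b) := by
        show π M' (a ⊗ₜ[A] b) = _
        exact Algebra.TensorProduct.map_tmul _ _ _ _
      rw [h1, hb M']
      by_cases h : M' = M
      · subst h; simp
      · simp [Pi.single_eq_of_ne h]
    | add u v hu hv =>
      obtain ⟨t1, h1⟩ := hu
      obtain ⟨t2, h2⟩ := hv
      exact ⟨t1 + t2, by rw [map_add, h1, h2, ← Pi.single_add]⟩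
  have hqsurj : Function.Surjective q := by
    intro y
    choose t ht using fun M : ι => hsingle M (y M)
    refine ⟨∑ M : ι, t M, ?_⟩
    rw [map_sum]
    simp_rw [ht]
    exact Finset.univ_sum_single y
  -- the kernel of q is nilpotent
  obtain ⟨n, hn⟩ := IsNoetherianRing.isNilpotent_nilradical T
  have hker : RingHom.ker q ≤ nilradical T := by
    intro z hz
    rw [nilradical_eq_sInf]
    refine Submodule.mem_sInf.mpr fun p hp => ?_
    haveI : Ideal.IsPrime p := hp
    set m : Ideal B :=
      Ideal.comap (Algebra.TensorProduct.includeRight (R := A) (A := L) (B := B)).toRingHom p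
      with hm
    haveI : m.IsPrime := Ideal.IsPrime.comap _
    haveI hmmax : m.IsMaximal := IsArtinianRing.isMaximal_of_isPrime m
    have hzm : π ⟨m, hmmax⟩ z = 0 := by
      have h0 : q z = 0 := hz
      exact congrFun h0 ⟨m, hmmax⟩
    -- exactness of tensoring
    have hexact : Function.Exact (Submodule.restrictScalars A m).subtype
        (Ideal.Quotient.mkₐ A m).toLinearMap := by
      rw [LinearMap.exact_iff]
      ext x
      simp [Ideal.Quotient.eq_zero_iff_mem]
    have hexT := lTensor_exact (f := (Submodule.restrictScalars A m).subtype)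
      (g := (Ideal.Quotient.mkₐ A m).toLinearMap) L hexact Ideal.Quotient.mk_surjective
    have heq : ∀ w : T, π ⟨m, hmmax⟩ w =
        LinearMap.lTensor L (Ideal.Quotient.mkₐ A m).toLinearMap w := by
      intro w
      induction w using TensorProduct.induction_on with
      | zero => simp
      | tmul a b =>
        rw [LinearMap.lTensor_tmul]
        exact Algebra.TensorProduct.map_tmul _ _ _ _
      | add u v hu hv => rw [map_add, map_add, hu, hv]
    obtain ⟨w, hw⟩ := (hexT z).mp (by rw [← heq, hzm])
    have hrange : ∀ w' : TensorProduct A L (Submodule.restrictScalars A m),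
        LinearMap.lTensor L (Submodule.restrictScalars A m).subtype w' ∈ p := by
      intro w'
      induction w' using TensorProduct.induction_on with
      | zero => simp
      | tmul a b =>
        have hb : ((1 : L) ⊗ₜ[A] (b : B)) ∈ p := b.2
        have h2 : LinearMap.lTensor L (Submodule.restrictScalars A m).subtype (a ⊗ₜ b) =
            (a ⊗ₜ[A] (1 : B)) * ((1 : L) ⊗ₜ[A] (b : B)) := by
          simp [Algebra.TensorProduct.tmul_mul_tmul, LinearMap.lTensor_tmul]
        rw [h2]
        exact Ideal.mul_mem_left p _ hb
      | add u v hu hv => rw [map_add]; exact Ideal.add_mem p hu hv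
    rw [← hw]
    exact hrange w
  have hInil : IsNilpotent (RingHom.ker q) := by
    refine ⟨n, ?_⟩
    have h3 : RingHom.ker q ^ n ≤ nilradical T ^ n := Ideal.pow_right_mono hker n
    rw [hn] at h3
    exact le_antisymm h3 bot_le
  -- lift
  let eqv := Ideal.quotientKerAlgEquivOfSurjective hqsurj
  let g : F' →ₐ[K] T ⧸ RingHom.ker q := eqv.symm.toAlgHom.comp τ
  obtain ⟨f, hf⟩ := aux_lift_nilpotent (RingHom.ker q) hInil g
  have hqf : ∀ y : F', q (f y) = τ y := by
    intro y
    have h1 : Ideal.Quotient.mkₐ K (RingHom.ker q) (f y) = g y := AlgHom.congr_fun hf y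
    have h2 : eqv (Ideal.Quotient.mkₐ K (RingHom.ker q) (f y)) = q (f y) := by
      show RingHom.kerLift (q : T →+* (∀ M : ι, TensorProduct A L (B ⧸ M.1)))
        (Ideal.Quotient.mk (RingHom.ker (q : T →+* (∀ M : ι, TensorProduct A L (B ⧸ M.1))))
          (f y)) = q (f y)
      exact RingHom.kerLift_mk _ (f y)
    rw [h1] at h2
    rw [← h2]
    show eqv (eqv.symm (τ y)) = τ y
    simp
  refine ⟨f.restrictScalars A, ?_, ?_⟩
  · intro x hx
    have h1 : (⟨(x : L), hx⟩ : F') = algebraMap K F' (ULift.up x) := Subtype.ext rfl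
    show f ⟨(x : L), hx⟩ = e x
    rw [h1, f.commutes]
    rfl
  · intro m hm
    ext y
    exact congrFun (hqf y) (⟨m, hm⟩ : ι)
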